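/- Let 0 < a < 1, x > 0, y > 0 with max{y, x, ay/x} < 1. Define weights α(0,0) := x, α(i,0) := 1 for i ≥ 1, α(0,j) := a for j ≥ 1, α(i,j) := 1 for i ≥ 1, j ≥ 1; β(0,0) := y, β(i,0) := ay/x for i ≥ 1, β(i,j) := 1 for j ≥ 1. Then the six-point-test matrix M(k) is positive semidefinite for every k ∈ ℤ₊² if and only if y ≤ min{ x/a, x √( (1−x²) / (x² − 2a²x² + a⁴) ) }. -/

import Mathlib

/-- The 2×2 matrix of the Six-point Test at base point `k` for a 2-variable
weighted shift with weight families `α`, `β`. -/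
def sixPointMatrix (α β : ℕ × ℕ → ℝ) (k : ℕ × ℕ) : Matrix (Fin 2) (Fin 2) ℝ :=
  !![α (k.1 + 1, k.2) ^ 2 - α k ^ 2,
     α (k.1, k.2 + 1) * β (k.1 + 1, k.2) - α k * β k;
     α (k.1, k.2 + 1) * β (k.1 + 1, k.2) - α k * β k,
     β (k.1, k.2 + 1) ^ 2 - β k ^ 2]

lemma psd2 (A B C : ℝ) (hA : 0 ≤ A) (hC : 0 ≤ C) (h : B ^ 2 ≤ A * C) :
    (!![A, B; B, C] : Matrix (Fin 2) (Fin 2) ℝ).PosSemidef := by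
  refine Matrix.posSemidef_iff_dotProduct_mulVec.mpr ⟨?_, ?_⟩
  · ext i j
    fin_cases i <;> fin_cases j <;>
      simp [Matrix.conjTranspose, Matrix.transpose]
  · intro v
    simp [dotProduct, Matrix.mulVec, Fin.sum_univ_two]
    rcases eq_or_lt_of_le hA with hA0 | hA0
    · have hB : B = 0 := by nlinarith [sq_nonneg B]
      rw [← hA0, hB]
      nlinarith [sq_nonneg (v 1)]
    · nlinarith [sq_nonneg (A * v 0 + B * v 1), mul_nonneg hC (sq_nonneg (v 1)),
        mul_pos hA0 hA0, sq_nonneg (v 1), mul_nonneg hA (sq_nonneg (v 1))]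

lemma psd2_rev (A B C : ℝ) (h : (!![A, B; B, C] : Matrix (Fin 2) (Fin 2) ℝ).PosSemidef)
    (hC : 0 < C) : B ^ 2 ≤ A * C := by
  have hq := h.dotProduct_mulVec_nonneg ![C, -B]
  simp [dotProduct, Matrix.mulVec, Fin.sum_univ_two] at hq
  have h2 : C * B ^ 2 ≤ C * (A * C) := by nlinarith [hq]
  exact (mul_le_mul_iff_right₀ hC).mp h2

/-- Joint hyponormality of the second family of 2-variable weighted shifts
(Figure 3) is equivalent to `y ≤ min{x/a, x√((1−x²)/(x²−2a²x²+a⁴))}`. -/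
theorem stmt11 (a x y : ℝ) (ha₀ : 0 < a) (ha₁ : a < 1) (hx : 0 < x) (hy : 0 < y)
    (hx₁ : x < 1) (hy₁ : y < 1) (hayx : a * y / x < 1)
    (α β : ℕ × ℕ → ℝ)
    (hα : ∀ i j : ℕ, α (i, j) = if i = 0 then (if j = 0 then x else a) else 1)
    (hβ : ∀ i j : ℕ, β (i, j) = if j = 0 then (if i = 0 then y else a * y / x) else 1) :
    (∀ k : ℕ × ℕ, (sixPointMatrix α β k).PosSemidef) ↔
      y ≤ min (x / a)
        (x * Real.sqrt ((1 - x ^ 2) / (x ^ 2 - 2 * a ^ 2 * x ^ 2 + a ^ 4))) := by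
  have hxne : x ≠ 0 := ne_of_gt hx
  have hD : 0 < x ^ 2 - 2 * a ^ 2 * x ^ 2 + a ^ 4 := by
    nlinarith [sq_nonneg (x ^ 2 - a ^ 2), mul_pos (mul_pos hx hx) (by nlinarith : (0:ℝ) < 1 - x ^ 2)]
  have hyxa : y < x / a := by
    rw [div_lt_one hx] at hayx
    rw [lt_div_iff₀ ha₀]
    linarith [hayx]
  -- characterization of the sqrt inequality
  have hsq : y ≤ x * Real.sqrt ((1 - x ^ 2) / (x ^ 2 - 2 * a ^ 2 * x ^ 2 + a ^ 4)) ↔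
      y ^ 2 * (x ^ 2 - 2 * a ^ 2 * x ^ 2 + a ^ 4) ≤ x ^ 2 * (1 - x ^ 2) := by
    rw [show x * Real.sqrt ((1 - x ^ 2) / (x ^ 2 - 2 * a ^ 2 * x ^ 2 + a ^ 4)) =
        Real.sqrt (x ^ 2 * ((1 - x ^ 2) / (x ^ 2 - 2 * a ^ 2 * x ^ 2 + a ^ 4))) by
      rw [Real.sqrt_mul (sq_nonneg x), Real.sqrt_sq hx.le]]
    rw [Real.le_sqrt hy.le (by
      have h1x : (0:ℝ) ≤ 1 - x ^ 2 := by nlinarith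
      positivity)]
    rw [mul_div_assoc', le_div_iff₀ hD]
  constructor
  · intro h
    have h0 := h (0, 0)
    rw [sixPointMatrix] at h0
    simp only [hα, hβ] at h0
    norm_num at h0
    have h00 := psd2_rev _ _ _ h0 (by nlinarith)
    -- h00 : 0 ≤ (1 - x^2) * (1 - y^2) - (a * (a*y/x) - x*y)^2  (up to simp normal form)
    have e : (a * (a * y / x) - x * y) * x = a ^ 2 * y - x ^ 2 * y := by
      field_simp
    have h2 : (a ^ 2 * y - x ^ 2 * y) ^ 2 ≤ x ^ 2 * ((1 - x ^ 2) * (1 - y ^ 2)) := by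
      have hmx := mul_le_mul_of_nonneg_right h00 (sq_nonneg x)
      calc (a ^ 2 * y - x ^ 2 * y) ^ 2 = (a * (a * y / x) - x * y) ^ 2 * x ^ 2 := by
            rw [← e]; ring
        _ ≤ x ^ 2 * ((1 - x ^ 2) * (1 - y ^ 2)) := by nlinarith [hmx]
    refine le_min hyxa.le (hsq.mpr ?_)
    nlinarith [h2]
  · intro hmin ⟨i, j⟩
    have key : y ^ 2 * (x ^ 2 - 2 * a ^ 2 * x ^ 2 + a ^ 4) ≤ x ^ 2 * (1 - x ^ 2) :=
      hsq.mp (le_trans hmin (min_le_right _ _))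
    rcases i with _ | i <;> rcases j with _ | j <;>
      rw [sixPointMatrix] <;> simp only [hα, hβ] <;> norm_num
    · -- k = (0,0)
      refine psd2 _ _ _ (by nlinarith) (by nlinarith) ?_
      have e : (a * (a * y / x) - x * y) * x = a ^ 2 * y - x ^ 2 * y := by
        field_simp
      have h2 : (a ^ 2 * y - x ^ 2 * y) ^ 2 ≤ x ^ 2 * ((1 - x ^ 2) * (1 - y ^ 2)) := by
        nlinarith [key, sq_nonneg y]
      have hx2 : (0:ℝ) < x ^ 2 := by positivity
      rw [← mul_le_mul_iff_left₀ hx2]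
      calc (a * (a * y / x) - x * y) ^ 2 * x ^ 2 = (a ^ 2 * y - x ^ 2 * y) ^ 2 := by
            rw [← e]; ring
        _ ≤ x ^ 2 * ((1 - x ^ 2) * (1 - y ^ 2)) := h2
        _ = (1 - x ^ 2) * (1 - y ^ 2) * x ^ 2 := by ring
    · -- k = (0, j+1)
      refine psd2 _ _ _ (by nlinarith) le_rfl ?_
      norm_num
    · -- k = (i+1, 0)
      refine psd2 _ _ _ le_rfl ?_ ?_
      · have h0 : 0 < a * y / x := by positivity
        nlinarith [hayx, h0]
      · norm_num
    · -- k = (i+1, j+1)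
      exact psd2 _ _ _ le_rfl le_rfl (by norm_num)
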